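/- Let 1 < α < 2 and N ≥ 2. The N×N symmetric Toeplitz matrix B with entries B_{k,k} = 2ω_1^{(α)}, B_{k,k±1} = ω_0^{(α)} + ω_2^{(α)}, and B_{k,l} = ω_{|k-l|+1}^{(α)} for |k-l| ≥ 2, where ω_j^{(α)} = (-1)^j C(α,j), is negative definite; equivalently, -B is a symmetric positive definite matrix. -/

import Mathlib

/-- The Grünwald–Letnikov weight `ω_j^{(α)} = (-1)^j C(α, j)` with the
generalized binomial coefficient `C(α, j) = α(α-1)⋯(α-j+1)/j!`. -/
noncomputable def glWeight (α : ℝ) (j : ℕ) : ℝ :=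
  (-1) ^ j * ((∏ i ∈ Finset.range j, (α - i)) / (Nat.factorial j))

/-- The `N×N` symmetric Toeplitz matrix `B^α_N` of the discretized fractional
derivative: diagonal `2ω_1`, first off-diagonals `ω_0 + ω_2`, and entries
`ω_{|k-l|+1}` for `|k-l| ≥ 2`. -/
noncomputable def fracToeplitz (α : ℝ) (N : ℕ) : Matrix (Fin N) (Fin N) ℝ :=
  fun k l =>
    if ((k : ℤ) - (l : ℤ)).natAbs = 0 then 2 * glWeight α 1
    else if ((k : ℤ) - (l : ℤ)).natAbs = 1 then glWeight α 0 + glWeight α 2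
    else glWeight α (((k : ℤ) - (l : ℤ)).natAbs + 1)


open Finset Matrix in

lemma posDef_of_dominant {n : Type*} [Fintype n] [DecidableEq n] (M : Matrix n n ℝ)
    (hsym : ∀ k l, M k l = M l k)
    (hdom : ∀ k, ∑ l ∈ Finset.univ.erase k, |M k l| < M k k) :
    M.PosDef := by
  rw [Matrix.posDef_iff_dotProduct_mulVec]
  constructor
  · ext k l
    simp [Matrix.conjTranspose, hsym k l]
  · intro x hx
    have hstar : star x = x := rfl
    rw [hstar]
    set R : n → ℝ := fun k => ∑ l ∈ univ.erase k, |M k l| with hR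
    have hQ : dotProduct x (M *ᵥ x) = ∑ k, ∑ l, x k * (M k l * x l) := by
      simp [dotProduct, Matrix.mulVec, Finset.mul_sum]
    have hswap : ∑ k, ∑ l ∈ univ.erase k, |M k l| * x l ^ 2
        = ∑ k, ∑ l ∈ univ.erase k, |M k l| * x k ^ 2 := by
      rw [Finset.sum_comm' (s' := fun l => univ.erase l) (t' := univ)
        (by intro k l; simp [eq_comm, ne_comm])]
      exact Finset.sum_congr rfl fun l _ => Finset.sum_congr rfl fun k _ => by rw [hsym k l]
    have h1 : ∀ k : n, ∀ l ∈ univ.erase k,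
        -(|M k l| * (x k ^ 2 + x l ^ 2) / 2) ≤ x k * (M k l * x l) := by
      intro k l _
      have h2 : |x k * (M k l * x l)| ≤ |M k l| * (x k ^ 2 + x l ^ 2) / 2 := by
        rw [abs_mul, abs_mul]
        have := two_mul_le_add_sq (|x k|) (|x l|)
        rw [sq_abs, sq_abs] at this
        nlinarith [abs_nonneg (M k l), abs_nonneg (x k), abs_nonneg (x l)]
      linarith [neg_abs_le (x k * (M k l * x l))]
    have h2 : ∑ k, (M k k * x k ^ 2 - ∑ l ∈ univ.erase k, |M k l| * (x k ^ 2 + x l ^ 2) / 2)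
        ≤ dotProduct x (M *ᵥ x) := by
      rw [hQ]
      refine Finset.sum_le_sum fun k _ => ?_
      rw [← Finset.add_sum_erase _ _ (Finset.mem_univ k), sub_eq_add_neg]
      refine add_le_add (le_of_eq (by ring)) ?_
      rw [← Finset.sum_neg_distrib]
      exact Finset.sum_le_sum (h1 k)
    have hswap' : ∑ k, ∑ l ∈ univ.erase k, |M k l| * x l ^ 2 / 2
        = ∑ k, ∑ l ∈ univ.erase k, |M k l| * x k ^ 2 / 2 := by
      rw [Finset.sum_comm' (s' := fun l => univ.erase l) (t' := univ)
        (by intro k l; simp [eq_comm, ne_comm])]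
      exact Finset.sum_congr rfl fun l _ => Finset.sum_congr rfl fun k _ => by rw [hsym k l]
    have h3 : ∑ k, (M k k * x k ^ 2 - ∑ l ∈ univ.erase k, |M k l| * (x k ^ 2 + x l ^ 2) / 2)
        = ∑ k, (M k k - R k) * x k ^ 2 := by
      have e1 : ∑ k, ∑ l ∈ univ.erase k, |M k l| * (x k ^ 2 + x l ^ 2) / 2
          = ∑ k, R k * x k ^ 2 := by
        calc ∑ k, ∑ l ∈ univ.erase k, |M k l| * (x k ^ 2 + x l ^ 2) / 2
            = ∑ k, ∑ l ∈ univ.erase k, (|M k l| * x k ^ 2 / 2 + |M k l| * x l ^ 2 / 2) := by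
              exact Finset.sum_congr rfl fun k _ => Finset.sum_congr rfl fun l _ => by ring
          _ = ∑ k, ((∑ l ∈ univ.erase k, |M k l| * x k ^ 2 / 2)
                + ∑ l ∈ univ.erase k, |M k l| * x l ^ 2 / 2) := by
              exact Finset.sum_congr rfl fun k _ => Finset.sum_add_distrib
          _ = (∑ k, ∑ l ∈ univ.erase k, |M k l| * x k ^ 2 / 2)
                + ∑ k, ∑ l ∈ univ.erase k, |M k l| * x l ^ 2 / 2 := Finset.sum_add_distrib
          _ = ∑ k, R k * x k ^ 2 := by
              rw [hswap', ← Finset.sum_add_distrib]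
              refine Finset.sum_congr rfl fun k _ => ?_
              rw [← Finset.sum_add_distrib, hR, Finset.sum_mul]
              exact Finset.sum_congr rfl fun l _ => by ring
      rw [Finset.sum_sub_distrib, e1, ← Finset.sum_sub_distrib]
      exact Finset.sum_congr rfl fun k _ => by ring
    have h4 : 0 < ∑ k, (M k k - R k) * x k ^ 2 := by
      obtain ⟨k0, hk0⟩ := Function.ne_iff.mp hx
      have hpos : 0 < x k0 ^ 2 := by
        rw [← sq_abs]; exact pow_pos (abs_pos.2 hk0) 2
      calc (0 : ℝ) < (M k0 k0 - R k0) * x k0 ^ 2 :=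
            mul_pos (sub_pos.2 (hdom k0)) hpos
        _ ≤ ∑ k, (M k k - R k) * x k ^ 2 :=
            Finset.single_le_sum
              (fun k _ => mul_nonneg (le_of_lt (sub_pos.2 (hdom k))) (sq_nonneg _))
              (Finset.mem_univ k0)
    linarith [h2, h3.symm.le.trans h2]

section Aux
open Finset
variable {α : ℝ}

variable {α : ℝ}

lemma glWeight_zero : glWeight α 0 = 1 := by simp [glWeight]

lemma glWeight_one : glWeight α 1 = -α := by simp [glWeight]

lemma glWeight_succ (α : ℝ) (j : ℕ) :
    glWeight α (j + 1) = glWeight α j * ((j - α) / (j + 1)) := by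
  have hj : ((j.factorial : ℝ)) ≠ 0 := Nat.cast_ne_zero.2 j.factorial_ne_zero
  have hj1 : ((j : ℝ) + 1) ≠ 0 := by positivity
  simp only [glWeight, Finset.prod_range_succ, pow_succ, Nat.factorial_succ]
  push_cast
  field_simp
  ring

lemma glWeight_pos (hα1 : 1 < α) (hα2 : α < 2) : ∀ j, 2 ≤ j → 0 < glWeight α j := by
  refine Nat.le_induction ?_ ?_
  · have : glWeight α 2 = α * (α - 1) / 2 := by
      rw [show (2:ℕ) = 1 + 1 from rfl, glWeight_succ, glWeight_one]
      push_cast; ring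
    rw [this]; nlinarith
  · intro j hj ih
    rw [glWeight_succ]
    apply mul_pos ih
    apply div_pos
    · have : (2:ℝ) ≤ j := by exact_mod_cast hj
      linarith
    · positivity

/-- Partial sums of GL weights: `∑_{j=0}^m ω_j = (-1)^m C(α-1, m)`. -/
lemma glWeight_partial_sum (α : ℝ) (m : ℕ) :
    ∑ j ∈ Finset.range (m + 1), glWeight α j
      = (-1) ^ m * ((∏ i ∈ Finset.range m, (α - 1 - i)) / m.factorial) := by
  induction m with
  | zero => simp [glWeight]
  | succ m ih =>
    rw [Finset.sum_range_succ, ih]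
    have hprod : ∏ i ∈ Finset.range (m + 1), (α - i)
        = α * ∏ i ∈ Finset.range m, (α - 1 - i) := by
      rw [Finset.prod_range_succ']
      simp only [Nat.cast_zero, sub_zero]
      rw [mul_comm]
      congr 1
      refine Finset.prod_congr rfl fun i _ => ?_
      push_cast; ring
    have hm : ((m.factorial : ℝ)) ≠ 0 := Nat.cast_ne_zero.2 m.factorial_ne_zero
    have hm1 : ((m : ℝ) + 1) ≠ 0 := by positivity
    simp only [glWeight, hprod, Finset.prod_range_succ, Nat.factorial_succ]
    push_cast
    field_simp
    ring

lemma glWeight_partial_sum_neg (hα1 : 1 < α) (hα2 : α < 2) :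
    ∀ m, 1 ≤ m → ∑ j ∈ Finset.range (m + 1), glWeight α j < 0 := by
  have key : ∀ m, 1 ≤ m → (-1 : ℝ) ^ m * ∏ i ∈ Finset.range m, (α - 1 - i) < 0 := by
    refine Nat.le_induction ?_ ?_
    · simp; linarith
    · intro m hm ih
      have h1 : (-1 : ℝ) ^ (m + 1) * ∏ i ∈ Finset.range (m + 1), (α - 1 - i)
          = ((-1) ^ m * ∏ i ∈ Finset.range m, (α - 1 - i)) * (-(α - 1 - m)) := by
        rw [Finset.prod_range_succ, pow_succ]; ring
      rw [h1]
      apply mul_neg_of_neg_of_pos ih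
      have : (1:ℝ) ≤ m := by exact_mod_cast hm
      linarith
  intro m hm
  rw [glWeight_partial_sum]
  rw [mul_div_assoc'] -- (-1)^m * P / m! ; sign
  apply div_neg_of_neg_of_pos
  · exact key m hm
  · exact_mod_cast m.factorial_pos

/-- Absolute off-diagonal entry at distance `j+1`. -/
noncomputable def glW (α : ℝ) (j : ℕ) : ℝ :=
  if j = 0 then 1 + glWeight α 2 else glWeight α (j + 2)

lemma glW_nonneg (hα1 : 1 < α) (hα2 : α < 2) (j : ℕ) : 0 ≤ glW α j := by
  unfold glW
  split
  · have := glWeight_pos hα1 hα2 2 le_rfl; linarith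
  · exact (glWeight_pos hα1 hα2 (j + 2) (by omega)).le

lemma glW_sum_lt (hα1 : 1 < α) (hα2 : α < 2) (m : ℕ) :
    ∑ j ∈ Finset.range m, glW α j < α := by
  rcases Nat.eq_zero_or_pos m with hm | hm
  · subst hm; simpa using by linarith
  · have hform : ∀ m, 1 ≤ m → ∑ j ∈ Finset.range m, glW α j
        = α + ∑ j ∈ Finset.range (m + 2), glWeight α j := by
      refine Nat.le_induction ?_ ?_
      · simp [glW, Finset.sum_range_succ, glWeight_zero, glWeight_one]
        ring
      · intro m hm ih
        have h2 : glW α m = glWeight α (m + 2) := if_neg (by omega)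
        rw [Finset.sum_range_succ, ih, h2]
        conv_rhs => rw [show m + 1 + 2 = m + 2 + 1 by omega, Finset.sum_range_succ]
        ring
    rw [hform m hm]
    have h3 := glWeight_partial_sum_neg hα1 hα2 (m + 1) (by omega)
    rw [show m + 1 + 1 = m + 2 by omega] at h3
    linarith

lemma fracToeplitz_abs (hα1 : 1 < α) (hα2 : α < 2) (N : ℕ) (k l : Fin N)
    (h : ((k : ℤ) - (l : ℤ)).natAbs ≠ 0) :
    |(-(fracToeplitz α N)) k l| = glW α (((k : ℤ) - (l : ℤ)).natAbs - 1) := by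
  set d := ((k : ℤ) - (l : ℤ)).natAbs with hd
  rw [Matrix.neg_apply, abs_neg]
  unfold fracToeplitz glW
  rw [← hd, if_neg h]
  rcases eq_or_ne d 1 with h1 | h1
  · rw [if_pos h1, h1]
    simp only [glWeight_zero, if_pos rfl]
    have := glWeight_pos hα1 hα2 2 le_rfl
    rw [abs_of_pos (by linarith)]
    simp
  · rw [if_neg h1, if_neg (by omega : d - 1 ≠ 0), show d - 1 + 2 = d + 1 by omega]
    exact abs_of_pos (glWeight_pos hα1 hα2 (d + 1) (by omega))

lemma row_sum_lt (hα1 : 1 < α) (hα2 : α < 2) (N : ℕ) (k : Fin N) :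
    ∑ l ∈ Finset.univ.erase k, |(-(fracToeplitz α N)) k l| < 2 * α := by
  classical
  have hsplit : Finset.univ.erase k
      = (Finset.univ.filter (fun l : Fin N => l.val < k.val))
        ∪ (Finset.univ.filter (fun l : Fin N => k.val < l.val)) := by
    ext l
    simp only [Finset.mem_erase, Finset.mem_union, Finset.mem_filter, Finset.mem_univ,
      true_and, and_true, ne_eq, Fin.ext_iff]
    omega
  have hdisj : Disjoint (Finset.univ.filter (fun l : Fin N => l.val < k.val))
      (Finset.univ.filter (fun l : Fin N => k.val < l.val)) := by
    rw [Finset.disjoint_left]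
    intro l h1 h2
    simp only [Finset.mem_filter] at h1 h2
    omega
  rw [hsplit, Finset.sum_union hdisj]
  have hlt : ∑ l ∈ Finset.univ.filter (fun l : Fin N => l.val < k.val),
      |(-(fracToeplitz α N)) k l| = ∑ j ∈ Finset.range k.val, glW α j := by
    refine Finset.sum_bij' (fun l _ => k.val - l.val - 1)
      (fun j hj => ⟨k.val - j - 1, by have := k.isLt; omega⟩) ?_ ?_ ?_ ?_ ?_
    · intro l hl
      simp only [Finset.mem_filter, Finset.mem_univ, true_and] at hl
      simp only [Finset.mem_range]; omega
    · intro j hj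
      simp only [Finset.mem_range] at hj
      simp only [Finset.mem_filter, Finset.mem_univ, true_and, Fin.val_mk]; omega
    · intro l hl
      simp only [Finset.mem_filter, Finset.mem_univ, true_and] at hl
      apply Fin.ext; simp only [Fin.val_mk]; omega
    · intro j hj
      simp only [Finset.mem_range] at hj
      simp only [Fin.val_mk]; omega
    · intro l hl
      simp only [Finset.mem_filter, Finset.mem_univ, true_and] at hl
      rw [fracToeplitz_abs hα1 hα2 N k l (by omega)]
      show glW α (((k : ℤ) - (l : ℤ)).natAbs - 1) = glW α (k.val - l.val - 1)
      congr 1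
      omega
  have hgt : ∑ l ∈ Finset.univ.filter (fun l : Fin N => k.val < l.val),
      |(-(fracToeplitz α N)) k l| = ∑ j ∈ Finset.range (N - 1 - k.val), glW α j := by
    refine Finset.sum_bij' (fun l _ => l.val - k.val - 1)
      (fun j hj => ⟨k.val + j + 1, by simp only [Finset.mem_range] at hj; omega⟩) ?_ ?_ ?_ ?_ ?_
    · intro l hl
      simp only [Finset.mem_filter, Finset.mem_univ, true_and] at hl
      simp only [Finset.mem_range]; have := l.isLt; omega
    · intro j hj
      simp only [Finset.mem_range] at hj
      simp only [Finset.mem_filter, Finset.mem_univ, true_and, Fin.val_mk]; omega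
    · intro l hl
      simp only [Finset.mem_filter, Finset.mem_univ, true_and] at hl
      apply Fin.ext; simp only [Fin.val_mk]; omega
    · intro j hj
      simp only [Finset.mem_range] at hj
      simp only [Fin.val_mk]; omega
    · intro l hl
      simp only [Finset.mem_filter, Finset.mem_univ, true_and] at hl
      rw [fracToeplitz_abs hα1 hα2 N k l (by omega)]
      show glW α (((k : ℤ) - (l : ℤ)).natAbs - 1) = glW α (l.val - k.val - 1)
      congr 1
      omega
  rw [hlt, hgt]
  have := glW_sum_lt hα1 hα2 k.val
  have := glW_sum_lt hα1 hα2 (N - 1 - k.val)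
  linarith

end Aux

/-- For `1 < α < 2` and `N ≥ 2` the Toeplitz matrix `B^α_N` is
negative definite, i.e. `-B^α_N` is symmetric positive definite. -/
theorem fracToeplitz_neg_posDef (α : ℝ) (hα1 : 1 < α) (hα2 : α < 2)
    (N : ℕ) (hN : 2 ≤ N) :
    (-(fracToeplitz α N)).PosDef := by
  apply posDef_of_dominant
  · intro k l
    simp only [Matrix.neg_apply, fracToeplitz]
    have h : ((k : ℤ) - (l : ℤ)).natAbs = ((l : ℤ) - (k : ℤ)).natAbs := by omega
    rw [h]
  · intro k
    have hdiag : (-(fracToeplitz α N)) k k = 2 * α := by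
      simp [fracToeplitz, glWeight_one]
    rw [hdiag]
    exact row_sum_lt hα1 hα2 N k
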